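/- Let $\tau_L$ have density $f(t) = \frac{L}{\sqrt{2\pi t^3}} e^{-L^2/(2t)}$ on $(0,\infty)$ and let $u(t) = e^{-b/(2t)}$ for $b>0$, with inverse $u^{-1}(s) = b/(2\ln(1/s))$. Then the best $u$-predictor is $E_u[\tau_L] = u^{-1}(E[u(\tau_L)]) = \frac{b}{\ln(b/L^2 + 1)}$, and $E_u[\tau_L] \to L^2$ as $b \to 0^+$. -/

import Mathlib

open MeasureTheory Real Set Filter Topology

lemma aux_integral {a : ℝ} (ha : 0 < a) :
    ∫ t in Ioi (0:ℝ), t ^ (-(3/2) : ℝ) * Real.exp (-(a * t⁻¹)) = Real.sqrt (π / a) := by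
  have h := integral_comp_rpow_Ioi
    (fun t : ℝ => t ^ (-(3/2) : ℝ) * Real.exp (-(a * t⁻¹))) (p := -1) (by norm_num)
  have key : ∫ t in Ioi (0:ℝ), t ^ (-(3/2) : ℝ) * Real.exp (-(a * t⁻¹))
      = ∫ x in Ioi (0:ℝ), x ^ ((1:ℝ)/2 - 1) * Real.exp (-(a * x)) := by
    rw [← h]
    refine setIntegral_congr_fun measurableSet_Ioi (fun x hx => ?_)
    have hx0 : (0:ℝ) < x := hx
    simp only [smul_eq_mul, abs_neg, abs_one, one_mul]
    rw [Real.rpow_neg_one, inv_inv, Real.inv_rpow hx0.le, ← Real.rpow_neg hx0.le,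
      ← mul_assoc, ← Real.rpow_add hx0]
    norm_num
  rw [key, Real.integral_rpow_mul_exp_neg_mul_Ioi (by norm_num : (0:ℝ) < 1/2) ha,
    Real.Gamma_one_half_eq, ← Real.sqrt_eq_rpow, ← Real.sqrt_mul (by positivity) π,
    show (1/a) * π = π / a by ring]

lemma aux_value (L : ℝ) (hL : 0 < L) (b : ℝ) (hb : 0 < b) :
    (∫ t in Set.Ioi (0 : ℝ),
          Real.exp (-b / (2 * t)) *
            (L / Real.sqrt (2 * Real.pi * t ^ 3) * Real.exp (-L ^ 2 / (2 * t))))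
      = L / Real.sqrt (b + L ^ 2) := by
  have ha : (0:ℝ) < (b + L ^ 2) / 2 := by positivity
  have key : ∀ t ∈ Ioi (0:ℝ),
      Real.exp (-b / (2 * t)) *
        (L / Real.sqrt (2 * Real.pi * t ^ 3) * Real.exp (-L ^ 2 / (2 * t)))
      = (L / Real.sqrt (2 * π)) * (t ^ (-(3/2) : ℝ) * Real.exp (-((b + L^2)/2 * t⁻¹))) := by
    intro t ht
    have ht0 : (0:ℝ) < t := ht
    have hst : Real.sqrt (t ^ 3) = t ^ ((3:ℝ)/2) := by
      rw [Real.sqrt_eq_rpow, ← Real.rpow_natCast t 3, ← Real.rpow_mul ht0.le]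
      norm_num
    have h2 : Real.sqrt (2*π) ≠ 0 := by positivity
    have h3 : t ^ ((3:ℝ)/2) ≠ 0 := by positivity
    rw [Real.sqrt_mul (by positivity) (t ^ 3), hst, Real.rpow_neg ht0.le,
      show -((b + L^2)/2 * t⁻¹) = -b/(2*t) + -L^2/(2*t) by field_simp; ring,
      Real.exp_add]
    field_simp
  rw [setIntegral_congr_fun measurableSet_Ioi key, integral_const_mul, aux_integral ha,
    show π / ((b + L^2)/2) = (2*π)/(b+L^2) by field_simp,
    Real.sqrt_div (by positivity) (b + L^2)]
  field_simp

/-- for the hitting-time density and `u(t) = exp(-b/(2t))` with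
inverse `u⁻¹(s) = b/(2 ln(1/s))`, the best `u`-predictor is
`E_u[τ_L] = u⁻¹(E[u(τ_L)]) = b / ln(b/L² + 1)`, and `E_u[τ_L] → L²` as
`b → 0⁺`. -/
theorem hitting_time_best_predictor
    (L : ℝ) (hL : 0 < L) :
    (∀ b > (0 : ℝ),
      b / (2 * Real.log (1 / ∫ t in Set.Ioi (0 : ℝ),
          Real.exp (-b / (2 * t)) *
            (L / Real.sqrt (2 * Real.pi * t ^ 3) * Real.exp (-L ^ 2 / (2 * t)))))
        = b / Real.log (b / L ^ 2 + 1)) ∧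
    Tendsto (fun b : ℝ => b / Real.log (b / L ^ 2 + 1)) (nhdsWithin 0 (Set.Ioi 0))
      (nhds (L ^ 2)) := by
  constructor
  · intro b hb
    have hA : (0:ℝ) < b + L ^ 2 := by positivity
    rw [aux_value L hL b hb]
    congr 1
    rw [one_div_div, Real.log_div (by positivity) hL.ne', Real.log_sqrt hA.le,
      show b / L ^ 2 + 1 = (b + L ^ 2) / L ^ 2 by field_simp,
      Real.log_div hA.ne' (by positivity),
      show Real.log (L ^ 2) = 2 * Real.log L by
        rw [show L ^ 2 = L ^ (2:ℕ) from rfl, Real.log_pow]; push_cast; ring]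
    ring
  · have hL2 : (0:ℝ) < L ^ 2 := by positivity
    have hd : HasDerivAt (fun x : ℝ => Real.log (1 + x)) 1 0 := by
      have := ((hasDerivAt_id (0:ℝ)).const_add 1).log (by norm_num)
      simpa using this
    have hslope := hasDerivAt_iff_tendsto_slope.mp hd
    have h1 : Tendsto (fun x : ℝ => Real.log (1 + x) / x) (𝓝[≠] 0) (𝓝 1) := by
      simpa [slope_fun_def, Real.log_one, div_eq_inv_mul] using hslope
    have h2 : Tendsto (fun x : ℝ => x / Real.log (1 + x)) (𝓝[≠] 0) (𝓝 1) := by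
      have := h1.inv₀ one_ne_zero
      simpa [inv_div] using this
    have hmap : Tendsto (fun b : ℝ => b / L ^ 2) (𝓝[>] 0) (𝓝[≠] (0:ℝ)) := by
      rw [tendsto_nhdsWithin_iff]
      constructor
      · have : Tendsto (fun b : ℝ => b / L ^ 2) (𝓝 0) (𝓝 (0 / L ^ 2)) :=
          (continuous_id.div_const _).tendsto 0
        simpa using this.mono_left nhdsWithin_le_nhds
      · filter_upwards [self_mem_nhdsWithin] with b hb
        exact (div_pos hb hL2).ne'
    have h4 := (h2.comp hmap).const_mul (L ^ 2)
    rw [mul_one] at h4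
    refine h4.congr (fun b => ?_)
    have hb' : L ^ 2 * (b / L ^ 2) = b := by field_simp
    show L ^ 2 * ((b / L ^ 2) / Real.log (1 + b / L ^ 2)) = b / Real.log (b / L ^ 2 + 1)
    rw [← mul_div_assoc, hb', add_comm]
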